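/- Let K be a compact subset of ℝ^n with nonempty interior U, let σ : ℝ^n → ℝ be continuous on K, and let λ ∈ ℝ. Suppose θ₁ : ℝ^n → ℝ is continuous on K, C² on U, strictly positive on U, vanishes on the frontier of K, and satisfies −Δθ₁(x) + (1/4)σ(x)θ₁(x) = λθ₁(x) for all x ∈ U. Then for every function θ : ℝ^n → ℝ that is continuous on K, C² on U, and strictly positive on all of K, there exists x₀ ∈ U with σ(x₀) − 4Δθ(x₀)/θ(x₀) ≤ 4λ. -/

import Mathlib

open Filter Topology Set

/-- 1D second-derivative test (necessary direction): at a local max, f'' ≤ 0. -/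
lemma secondDerivTest_max {f : ℝ → ℝ} {a c : ℝ} (hmax : IsLocalMax f a)
    (hd : ∀ᶠ x in 𝓝 a, DifferentiableAt ℝ f x)
    (hc : HasDerivAt (deriv f) c a) : c ≤ 0 := by
  by_contra hlt
  push_neg at hlt
  have h0 : deriv f a = 0 := hmax.deriv_eq_zero
  have hslope : Tendsto (slope (deriv f) a) (𝓝[≠] a) (𝓝 c) :=
    hasDerivAt_iff_tendsto_slope.1 hc
  have hright : Tendsto (slope (deriv f) a) (𝓝[>] a) (𝓝 c) :=
    hslope.mono_left (nhdsWithin_mono a fun x hx => ne_of_gt hx)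
  have hpos : ∀ᶠ x in 𝓝[>] a, 0 < slope (deriv f) a x :=
    hright.eventually (eventually_gt_nhds hlt)
  have hd' : ∀ᶠ x in 𝓝[>] a, DifferentiableAt ℝ f x := hd.filter_mono nhdsWithin_le_nhds
  have hmax' : ∀ᶠ x in 𝓝[>] a, f x ≤ f a := hmax.filter_mono nhdsWithin_le_nhds
  obtain ⟨b, hab, hsub⟩ := mem_nhdsGT_iff_exists_Ioc_subset.1
    (hpos.and (hd'.and hmax'))
  have hab' : a < b := hab
  have hda : DifferentiableAt ℝ f a := hd.self_of_nhds
  have hcont : ContinuousOn f (Icc a b) := by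
    intro x hx
    rcases eq_or_lt_of_le hx.1 with h | h
    · exact (h ▸ hda.continuousAt).continuousWithinAt
    · exact ((hsub ⟨h, hx.2⟩).2.1.continuousAt).continuousWithinAt
  have hderivpos : ∀ x ∈ interior (Icc a b), 0 < deriv f x := by
    intro x hx
    rw [interior_Icc] at hx
    have hmem : x ∈ Ioc a b := ⟨hx.1, hx.2.le⟩
    have hs := (hsub hmem).1
    rw [slope_def_field] at hs
    have hxa : 0 < x - a := sub_pos.2 hx.1
    have : 0 < (deriv f x - deriv f a) / (x - a) := by
      simpa [div_eq_inv_mul, slope] using hs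
    rw [h0, sub_zero] at this
    exact (div_pos_iff.1 this).elim (fun h => h.1) (fun h => absurd h.2 (not_lt.2 hxa.le))
  have hmono : StrictMonoOn f (Icc a b) :=
    strictMonoOn_of_deriv_pos (convex_Icc a b) hcont hderivpos
  have h1 : f a < f b := hmono ⟨le_rfl, hab'.le⟩ ⟨hab'.le, le_rfl⟩ hab'
  have h2 : f b ≤ f a := (hsub ⟨hab', le_rfl⟩).2.2
  linarith

variable {E : Type*} [NormedAddCommGroup E] [NormedSpace ℝ E]

lemma line_hasDerivAt {g : E → ℝ} {U : Set E} (hU : IsOpen U) (hg : ContDiffOn ℝ 2 g U)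
    (x v : E) {t : ℝ} (ht : x + t • v ∈ U) :
    HasDerivAt (fun s : ℝ => g (x + s • v)) (fderiv ℝ g (x + t • v) v) t := by
  have hL : HasDerivAt (fun s : ℝ => x + s • v) v t := by
    simpa using ((hasDerivAt_id t).smul_const v).const_add x
  have hdg : DifferentiableAt ℝ g (x + t • v) :=
    (hg.contDiffAt (hU.mem_nhds ht)).differentiableAt (by norm_num)
  exact hdg.hasFDerivAt.comp_hasDerivAt t hL

lemma line_secondDeriv {g : E → ℝ} {U : Set E} (hU : IsOpen U) (hg : ContDiffOn ℝ 2 g U)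
    {x : E} (v : E) (hx : x ∈ U) :
    HasDerivAt (fun t : ℝ => fderiv ℝ g (x + t • v) v)
      (fderiv ℝ (fderiv ℝ g) x v v) 0 := by
  have hL : HasDerivAt (fun s : ℝ => x + s • v) v 0 := by
    simpa using ((hasDerivAt_id (0:ℝ)).smul_const v).const_add x
  have hf' : ContDiffOn ℝ 1 (fderiv ℝ g) U := hg.fderiv_of_isOpen hU (by norm_num)
  have hdf : DifferentiableAt ℝ (fderiv ℝ g) x :=
    (hf'.contDiffAt (hU.mem_nhds hx)).differentiableAt (by norm_num)
  have hx0 : x + (0:ℝ) • v = x := by simp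
  have hdf' : HasFDerivAt (fderiv ℝ g) (fderiv ℝ (fderiv ℝ g) x) (x + (0:ℝ) • v) := by
    rw [hx0]; exact hdf.hasFDerivAt
  have h1 : HasDerivAt (fun t : ℝ => fderiv ℝ g (x + t • v))
      (fderiv ℝ (fderiv ℝ g) x v) 0 := hdf'.comp_hasDerivAt 0 hL
  exact (ContinuousLinearMap.apply ℝ ℝ v).hasFDerivAt.comp_hasDerivAt 0 h1


/-- The Euclidean Laplacian of `f` at `x`: the trace of the second derivative. -/
noncomputable def lap {n : ℕ} (f : EuclideanSpace ℝ (Fin n) → ℝ)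
    (x : EuclideanSpace ℝ (Fin n)) : ℝ :=
  ∑ i : Fin n, fderiv ℝ (fderiv ℝ f) x (EuclideanSpace.single i 1) (EuclideanSpace.single i 1)

/-- The 1/4-Proposition (Euclidean-domain form): `sup_θ inf_x (σ − 4Δθ/θ) ≤ 4λ₁`. -/
theorem quarter_proposition {n : ℕ}
    (K : Set (EuclideanSpace ℝ (Fin n))) (hK : IsCompact K)
    (hUne : (interior K).Nonempty)
    (σ : EuclideanSpace ℝ (Fin n) → ℝ) (hσ : ContinuousOn σ K)
    (lam : ℝ)
    (θ₁ : EuclideanSpace ℝ (Fin n) → ℝ)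
    (hθ₁cont : ContinuousOn θ₁ K)
    (hθ₁C2 : ContDiffOn ℝ 2 θ₁ (interior K))
    (hθ₁pos : ∀ x ∈ interior K, 0 < θ₁ x)
    (hθ₁bd : ∀ x ∈ frontier K, θ₁ x = 0)
    (heig : ∀ x ∈ interior K, -lap θ₁ x + (1 / 4) * σ x * θ₁ x = lam * θ₁ x) :
    ∀ θ : EuclideanSpace ℝ (Fin n) → ℝ,
      ContinuousOn θ K → ContDiffOn ℝ 2 θ (interior K) → (∀ x ∈ K, 0 < θ x) →
      ∃ x₀ ∈ interior K, σ x₀ - 4 * lap θ x₀ / θ x₀ ≤ 4 * lam := by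
  intro θ hθcont hθC2 hθpos
  obtain ⟨u, hu⟩ := hUne
  have hKne : K.Nonempty := ⟨u, interior_subset hu⟩
  set F := fun y => θ₁ y / θ y with hF
  have hFcont : ContinuousOn F K := hθ₁cont.div hθcont fun y hy => (hθpos y hy).ne'
  obtain ⟨x₀, hx₀K, hmaxOn⟩ := hK.exists_isMaxOn hKne hFcont
  have hmaxOn' : ∀ y ∈ K, F y ≤ F x₀ := hmaxOn
  have hm : 0 < F x₀ :=
    lt_of_lt_of_le (div_pos (hθ₁pos u hu) (hθpos _ (interior_subset hu)))
      (hmaxOn' u (interior_subset hu))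
  have hx₀ : x₀ ∈ interior K := by
    by_contra h
    have hfr : x₀ ∈ frontier K := by
      rw [hK.isClosed.frontier_eq]
      exact ⟨hx₀K, h⟩
    have h0 : θ₁ x₀ = 0 := hθ₁bd _ hfr
    simp only [hF, h0, zero_div] at hm
    exact lt_irrefl 0 hm
  set m := F x₀ with hmdef
  have hθx₀ : 0 < θ x₀ := hθpos _ hx₀K
  have hmθ : θ₁ x₀ = m * θ x₀ := by
    simp only [hmdef, hF]
    exact (div_mul_cancel₀ _ hθx₀.ne').symm
  have hbound : ∀ y ∈ K, θ₁ y - m * θ y ≤ 0 := by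
    intro y hy
    have := hmaxOn' y hy
    rw [hF, div_le_iff₀ (hθpos y hy)] at this
    linarith
  set h : EuclideanSpace ℝ (Fin n) → ℝ := fun y => θ₁ y - m * θ y with hhdef
  have hmaxh : IsLocalMax h x₀ := by
    have : ∀ᶠ y in 𝓝 x₀, y ∈ K := by
      filter_upwards [isOpen_interior.mem_nhds hx₀] with y hy using interior_subset hy
    filter_upwards [this] with y hy
    have : h x₀ = 0 := by simp [hhdef, hmθ]
    rw [this]
    exact hbound y hy
  -- directional second derivative bound
  have hUo : IsOpen (interior K) := isOpen_interior
  have hci : ∀ i : Fin n,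
      fderiv ℝ (fderiv ℝ θ₁) x₀ (EuclideanSpace.single i 1) (EuclideanSpace.single i 1)
        - m * fderiv ℝ (fderiv ℝ θ) x₀ (EuclideanSpace.single i 1) (EuclideanSpace.single i 1)
        ≤ 0 := by
    intro i
    set e : EuclideanSpace ℝ (Fin n) := EuclideanSpace.single i 1 with he
    set L : ℝ → EuclideanSpace ℝ (Fin n) := fun t => x₀ + t • e with hL
    have hLc : Continuous L := by fun_prop
    have hL0 : L 0 = x₀ := by simp [hL]
    have hmem : ∀ᶠ t in 𝓝 (0:ℝ), L t ∈ interior K := by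
      have : Tendsto L (𝓝 0) (𝓝 x₀) := hL0 ▸ hLc.continuousAt
      exact this.eventually (hUo.mem_nhds hx₀ : interior K ∈ 𝓝 x₀)
    set φ : ℝ → ℝ := fun t => θ₁ (L t) - m * θ (L t) with hφ
    have hder : ∀ t : ℝ, L t ∈ interior K → HasDerivAt φ
        (fderiv ℝ θ₁ (L t) e - m * fderiv ℝ θ (L t) e) t := by
      intro t ht
      exact (line_hasDerivAt hUo hθ₁C2 x₀ e ht).sub
        ((line_hasDerivAt hUo hθC2 x₀ e ht).const_mul m)
    have hDiff : ∀ᶠ t in 𝓝 (0:ℝ), DifferentiableAt ℝ φ t := by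
      filter_upwards [hmem] with t ht using (hder t ht).differentiableAt
    have hderivEq : deriv φ =ᶠ[𝓝 (0:ℝ)]
        fun t => fderiv ℝ θ₁ (L t) e - m * fderiv ℝ θ (L t) e := by
      filter_upwards [hmem] with t ht using (hder t ht).deriv
    have hψ : HasDerivAt (fun t => fderiv ℝ θ₁ (L t) e - m * fderiv ℝ θ (L t) e)
        (fderiv ℝ (fderiv ℝ θ₁) x₀ e e - m * fderiv ℝ (fderiv ℝ θ) x₀ e e) 0 :=
      (line_secondDeriv hUo hθ₁C2 e hx₀).sub
        ((line_secondDeriv hUo hθC2 e hx₀).const_mul m)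
    have hc : HasDerivAt (deriv φ)
        (fderiv ℝ (fderiv ℝ θ₁) x₀ e e - m * fderiv ℝ (fderiv ℝ θ) x₀ e e) 0 :=
      hψ.congr_of_eventuallyEq hderivEq
    have hmaxφ : IsLocalMax φ 0 := by
      have hT : Tendsto L (𝓝 0) (𝓝 x₀) := hL0 ▸ hLc.continuousAt
      have := hT.eventually hmaxh
      filter_upwards [this] with t ht
      simpa [hφ, hhdef, hL0] using ht
    exact secondDerivTest_max hmaxφ hDiff hc
  have hsum : lap θ₁ x₀ - m * lap θ x₀ ≤ 0 := by
    rw [lap, lap, Finset.mul_sum, ← Finset.sum_sub_distrib]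
    exact Finset.sum_nonpos fun i _ => hci i
  have heq := heig x₀ hx₀
  refine ⟨x₀, hx₀, ?_⟩
  rw [sub_le_iff_le_add, ← sub_le_iff_le_add']
  rw [le_div_iff₀ hθx₀]
  have h1 : lap θ₁ x₀ = (1 / 4 * σ x₀ - lam) * (m * θ x₀) := by
    rw [← hmθ]; linarith
  have h2 : m * ((1 / 4 * σ x₀ - lam) * θ x₀) ≤ m * lap θ x₀ := by
    nlinarith [hsum, h1]
  have h3 : (1 / 4 * σ x₀ - lam) * θ x₀ ≤ lap θ x₀ := le_of_mul_le_mul_left h2 hm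
  nlinarith [h3]
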